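/- Assume p > 2 and d = d2 > d1. If j2 = 1, then S_{f1,f2} contains an absolutely irreducible component defined over 𝔽_q. -/

import Mathlib

open MvPolynomial Finset

/-- The homogeneous polynomial `F` defining the hypersurface `S_{f1,f2}` for
`f1(X,Y) = Y + ∑ a_i X^i` and `f2(X,Y) = ∑ b_{i,j} X^i Y^j`, with
`d = max (deg f1) (deg f2)`. -/
noncomputable def SpolySpec {F : Type} [Field F] (a : ℕ → F) (b : ℕ → ℕ → F) (d : ℕ) :
    MvPolynomial (Fin 5) F :=
  (X 2 - X 4) ^ 2 * X 0 ^ (d - 1)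
  - (X 2 - X 4) * (∑ i ∈ Finset.range (d + 1), C (a i) * (X 3 ^ i - X 1 ^ i) * X 0 ^ (d - i))
  - (X 1 - X 3) * (∑ i ∈ Finset.range (d + 1), ∑ j ∈ Finset.range (d + 1),
      C (b i j) * (X 3 ^ i * X 4 ^ j - X 1 ^ i * X 2 ^ j) * X 0 ^ (d - i - j))

/-- `P` has a nonconstant divisor over `F` that stays irreducible over the algebraic
closure, i.e. the hypersurface `P = 0` contains an absolutely irreducible component
defined over `F`. -/
def HasAbsIrredComp {F : Type} [Field F] (P : MvPolynomial (Fin 5) F) : Prop :=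
  ∃ g : MvPolynomial (Fin 5) F, g ∣ P ∧ g.totalDegree ≠ 0 ∧
    Irreducible (MvPolynomial.map (algebraMap F (AlgebraicClosure F)) g)

namespace Stmt12

section Lifts
variable {K L : Type*} [Field K] [Field L] [Algebra K L] {σ : Type*}

noncomputable def proj (lam : L →ₗ[K] K) (q : MvPolynomial σ L) : MvPolynomial σ K :=
  ∑ m ∈ q.support, monomial m (lam (q.coeff m))

lemma coeff_proj (lam : L →ₗ[K] K) (q : MvPolynomial σ L) (m : σ →₀ ℕ) :
    (proj lam q).coeff m = lam (q.coeff m) := by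
  classical
  rw [proj, MvPolynomial.coeff_sum]
  simp only [MvPolynomial.coeff_monomial]
  rw [Finset.sum_ite_eq' q.support m (fun m' => lam (q.coeff m'))]
  split_ifs with h
  · rfl
  · rw [MvPolynomial.notMem_support_iff.mp h, map_zero]

lemma proj_map_mul (lam : L →ₗ[K] K) (a : MvPolynomial σ K) (c : MvPolynomial σ L) :
    proj lam (MvPolynomial.map (algebraMap K L) a * c) = a * proj lam c := by
  classical
  apply MvPolynomial.ext
  intro m
  rw [coeff_proj, MvPolynomial.coeff_mul, MvPolynomial.coeff_mul, map_sum]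
  refine Finset.sum_congr rfl fun x _ => ?_
  rw [MvPolynomial.coeff_map, coeff_proj, ← Algebra.smul_def, map_smul, smul_eq_mul]

lemma proj_map (lam : L →ₗ[K] K) (hlam : lam 1 = 1) (b : MvPolynomial σ K) :
    proj lam (MvPolynomial.map (algebraMap K L) b) = b := by
  apply MvPolynomial.ext
  intro m
  rw [coeff_proj, MvPolynomial.coeff_map, Algebra.algebraMap_eq_smul_one, map_smul, hlam,
    smul_eq_mul, mul_one]

lemma exists_lam (K L : Type*) [Field K] [Field L] [Algebra K L] :
    ∃ lam : L →ₗ[K] K, lam 1 = 1 := by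
  set B := Module.Basis.ofVectorSpace K L
  have h1 : B.repr 1 ≠ 0 := by
    intro h
    have h2 : (1 : L) = 0 := by
      have := congrArg B.repr.symm h
      simpa using this
    exact one_ne_zero h2
  obtain ⟨i, hi⟩ := Finsupp.ne_iff.mp h1
  have hi' : B.repr 1 i ≠ 0 := by simpa using hi
  refine ⟨(B.repr 1 i)⁻¹ • B.coord i, ?_⟩
  simp only [LinearMap.smul_apply, Module.Basis.coord_apply, smul_eq_mul]
  rw [inv_mul_cancel₀ hi']

lemma dvd_descent {a b : MvPolynomial σ K}
    (h : MvPolynomial.map (algebraMap K L) a ∣ MvPolynomial.map (algebraMap K L) b) :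
    a ∣ b := by
  obtain ⟨c, hc⟩ := h
  obtain ⟨lam, hlam⟩ := exists_lam K L
  refine ⟨proj lam c, ?_⟩
  have h2 := congrArg (proj lam) hc
  rwa [proj_map lam hlam, proj_map_mul] at h2

lemma mv_lift (q : MvPolynomial σ L) (h : ∀ m, q.coeff m ∈ Set.range (algebraMap K L)) :
    ∃ q₀ : MvPolynomial σ K, MvPolynomial.map (algebraMap K L) q₀ = q := by
  classical
  refine ⟨∑ m ∈ q.support, monomial m (Function.invFun (algebraMap K L) (q.coeff m)), ?_⟩
  apply MvPolynomial.ext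
  intro m
  rw [MvPolynomial.coeff_map]
  have h1 : (∑ m' ∈ q.support,
      monomial m' (Function.invFun (algebraMap K L) (q.coeff m'))).coeff m
      = if m ∈ q.support then Function.invFun (algebraMap K L) (q.coeff m) else 0 := by
    rw [MvPolynomial.coeff_sum]
    simp only [MvPolynomial.coeff_monomial]
    exact Finset.sum_ite_eq' q.support m _
  rw [h1]
  split_ifs with hm
  · exact Function.invFun_eq (h m)
  · rw [map_zero, (MvPolynomial.notMem_support_iff.mp hm)]

end Lifts



lemma mem_range_of_pow_card {K L : Type*} [Field K] [Fintype K] [Field L] [Algebra K L]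
    (x : L) (hx : x ^ Fintype.card K = x) :
    x ∈ Set.range (algebraMap K L) := by
  classical
  set q := Fintype.card K with hq
  have hq1 : 1 < q := Fintype.one_lt_card
  set f : Polynomial L := Polynomial.X ^ q - Polynomial.X with hf
  have hf0 : f ≠ 0 := FiniteField.X_pow_card_sub_X_ne_zero L hq1
  have hdeg : f.natDegree = q := FiniteField.X_pow_card_sub_X_natDegree_eq L hq1
  set S : Finset L := Finset.univ.image (algebraMap K L) with hS
  by_contra hxr
  have hxS : x ∉ S := by
    intro hmem
    obtain ⟨k, _, hk⟩ := Finset.mem_image.mp hmem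
    exact hxr ⟨k, hk⟩
  have hroot : ∀ y : L, y ^ q = y → y ∈ f.roots := by
    intro y hy
    rw [Polynomial.mem_roots hf0]
    simp [Polynomial.IsRoot, hf, hy]
  have hle : x ::ₘ S.val ≤ f.roots := by
    rw [Multiset.le_iff_count]
    intro a
    by_cases hax : a = x
    · rw [hax, Multiset.count_cons_self]
      have h0 : Multiset.count x S.val = 0 := Multiset.count_eq_zero.mpr hxS
      rw [h0]
      exact Multiset.one_le_count_iff_mem.mpr (hroot x hx)
    · rw [Multiset.count_cons_of_ne hax]
      by_cases haS : a ∈ S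
      · have hcount : Multiset.count a S.val = 1 :=
          Multiset.count_eq_one_of_mem S.nodup haS
        rw [hcount]
        refine Multiset.one_le_count_iff_mem.mpr (hroot a ?_)
        obtain ⟨k, _, rfl⟩ := Finset.mem_image.mp haS
        rw [← map_pow, FiniteField.pow_card]
      · rw [Multiset.count_eq_zero.mpr haS]
        exact Nat.zero_le _
  have hcard := Multiset.card_le_card hle
  rw [Multiset.card_cons] at hcard
  have hSq : S.val.card = q := by
    have h2 : S.card = q := by
      rw [hS, Finset.card_image_of_injective _ (algebraMap K L).injective, Finset.card_univ]
    simpa using h2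
  have hub : f.roots.card ≤ f.natDegree := Polynomial.card_roots' f
  omega

lemma isUnit_eq_C {K : Type*} [Field K] :
    ∀ (n : ℕ) (v : MvPolynomial (Fin n) K), IsUnit v → ∃ c : K, v = C c := by
  intro n
  induction n with
  | zero =>
    intro v _
    exact ⟨constantCoeff v, eq_C_of_isEmpty v⟩
  | succ n ih =>
    intro v hv
    have h1 : IsUnit (finSuccEquiv K n v) := hv.map (finSuccEquiv K n)
    have h2 := Polynomial.natDegree_eq_zero_of_isUnit h1
    have h3 := Polynomial.eq_C_of_natDegree_eq_zero h2
    have h4 : IsUnit ((finSuccEquiv K n v).coeff 0) := Polynomial.isUnit_C.mp (h3 ▸ h1)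
    obtain ⟨c, hc⟩ := ih _ h4
    refine ⟨c, ?_⟩
    have h5 : finSuccEquiv K n v = Polynomial.C (MvPolynomial.C c) := by rw [h3, hc]
    have h6 := congrArg (finSuccEquiv K n).symm h5
    rw [AlgEquiv.symm_apply_apply] at h6
    rw [h6]
    exact RingHom.congr_fun (finSuccEquiv_comp_C_eq_C n) c

lemma finSuccEquiv_map {K L : Type*} [CommSemiring K] [CommSemiring L] (f : K →+* L) (n : ℕ)
    (q : MvPolynomial (Fin (n + 1)) K) :
    finSuccEquiv L n (MvPolynomial.map f q) =
      Polynomial.map (MvPolynomial.map f) (finSuccEquiv K n q) := by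
  induction q using MvPolynomial.induction_on with
  | C r =>
    simp [MvPolynomial.map_C, finSuccEquiv_apply]
  | add p q hp hq =>
    simp only [map_add, Polynomial.map_add, hp, hq]
  | mul_X p i hp =>
    simp only [map_mul, MvPolynomial.map_X, Polynomial.map_mul, hp]
    congr 1
    refine Fin.cases ?_ ?_ i
    · simp [finSuccEquiv_X_zero]
    · intro j
      simp [finSuccEquiv_X_succ]

lemma finSuccEquiv_rename_succ {K : Type*} [CommSemiring K] {n : ℕ}
    (q : MvPolynomial (Fin n) K) :
    finSuccEquiv K n (rename Fin.succ q) = Polynomial.C q := by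
  induction q using MvPolynomial.induction_on with
  | C r =>
    rw [rename_C]
    simp [finSuccEquiv_apply]
  | add p q hp hq => simp [hp, hq]
  | mul_X p i hp =>
    rw [map_mul, map_mul, rename_X, finSuccEquiv_X_succ, hp, ← map_mul]

lemma eq_C_of_totalDegree_eq_zero {R σ : Type*} [CommSemiring R] {p : MvPolynomial σ R}
    (h : p.totalDegree = 0) : p = C (p.coeff 0) := by
  classical
  apply MvPolynomial.ext
  intro m
  rcases eq_or_ne m 0 with rfl | hm
  · simp
  · rw [MvPolynomial.coeff_C, if_neg (Ne.symm hm)]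
    by_contra hc
    have hmem : m ∈ p.support := MvPolynomial.mem_support_iff.mpr hc
    have hz := (MvPolynomial.totalDegree_eq_zero_iff _ p).mp h m hmem
    exact hm (Finsupp.ext hz)

theorem main_lin {K : Type} [Field K] [Fintype K] {p ℓ : ℕ} (hp : p.Prime) [CharP K p]
    (hcard : Fintype.card K = p ^ ℓ) {n : ℕ} (H : Polynomial (MvPolynomial (Fin n) K))
    (hdeg : H.natDegree = 1) :
    ∃ g : Polynomial (MvPolynomial (Fin n) K),
      Polynomial.map (MvPolynomial.map (algebraMap K (AlgebraicClosure K))) g ∣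
        Polynomial.map (MvPolynomial.map (algebraMap K (AlgebraicClosure K))) H ∧
      Irreducible (Polynomial.map (MvPolynomial.map (algebraMap K (AlgebraicClosure K))) g) := by
  classical
  haveI : Fact p.Prime := ⟨hp⟩
  set L := AlgebraicClosure K with hL
  set θ : MvPolynomial (Fin n) K →+* MvPolynomial (Fin n) L :=
    MvPolynomial.map (algebraMap K L) with hθ
  have hθinj : Function.Injective θ := MvPolynomial.map_injective _ (algebraMap K L).injective
  set HL : Polynomial (MvPolynomial (Fin n) L) := Polynomial.map θ H with hHL
  have hndL : HL.natDegree = 1 := by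
    rw [hHL, Polynomial.natDegree_map_eq_of_injective hθinj, hdeg]
  have hHL0 : HL ≠ 0 := fun h => by simp [h] at hndL
  obtain ⟨fs, hfs, hassoc⟩ := WfDvdMonoid.exists_factors HL hHL0
  obtain ⟨u, hu⟩ := hassoc
  have h0fs : (0 : Polynomial (MvPolynomial (Fin n) L)) ∉ fs := fun h => (hfs 0 h).ne_zero rfl
  have hprod0 : fs.prod ≠ 0 := Multiset.prod_ne_zero h0fs
  have hsum : (fs.map Polynomial.natDegree).sum = 1 := by
    have h2 : fs.prod.natDegree = (fs.map Polynomial.natDegree).sum :=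
      Polynomial.natDegree_multiset_prod fs h0fs
    have h3 : HL.natDegree = fs.prod.natDegree := by
      rw [← hu, Polynomial.natDegree_mul hprod0 (Units.ne_zero u),
        Polynomial.natDegree_eq_zero_of_isUnit u.isUnit, add_zero]
    rw [← h2, ← h3, hndL]
  have hex : ∃ g0 ∈ fs, Polynomial.natDegree g0 = 1 := by
    by_contra hno
    push_neg at hno
    have hall : ∀ x ∈ fs.map Polynomial.natDegree, x = 0 := by
      intro x hx
      have hle : x ≤ 1 := by
        rw [← hsum]
        exact Multiset.single_le_sum (fun y _ => Nat.zero_le y) _ hx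
      obtain ⟨g0, hg0, rfl⟩ := Multiset.mem_map.mp hx
      have := hno g0 hg0
      omega
    have := Multiset.sum_eq_zero hall
    omega
  obtain ⟨gL0, hgL0mem, hgL0deg⟩ := hex
  have hgL0irr : Irreducible gL0 := hfs _ hgL0mem
  have hgL0dvd : gL0 ∣ HL := (Multiset.dvd_prod hgL0mem).trans ⟨u, hu.symm⟩
  have hp1 : gL0.coeff 1 ≠ 0 := by
    have h4 := Polynomial.leadingCoeff_ne_zero.mpr hgL0irr.ne_zero
    rwa [Polynomial.leadingCoeff, hgL0deg] at h4
  obtain ⟨m, hm⟩ := MvPolynomial.support_nonempty.mpr hp1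
  set c0 := (gL0.coeff 1).coeff m with hc0def
  have hc0 : c0 ≠ 0 := MvPolynomial.mem_support_iff.mp hm
  set gL : Polynomial (MvPolynomial (Fin n) L) :=
    Polynomial.C (MvPolynomial.C c0⁻¹) * gL0 with hgLdef
  have hunitC : IsUnit (Polynomial.C (MvPolynomial.C (c0⁻¹ : L))) :=
    ((isUnit_iff_ne_zero.mpr (inv_ne_zero hc0)).map
      (MvPolynomial.C : L →+* MvPolynomial (Fin n) L)).map
      (Polynomial.C : MvPolynomial (Fin n) L →+* Polynomial (MvPolynomial (Fin n) L))
  have hgLirr : Irreducible gL := (irreducible_isUnit_mul hunitC).mpr hgL0irr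
  have hCC : Polynomial.C (MvPolynomial.C (c0⁻¹ : L) : MvPolynomial (Fin n) L) *
      Polynomial.C (MvPolynomial.C c0 : MvPolynomial (Fin n) L) = 1 := by
    rw [← map_mul, ← map_mul, inv_mul_cancel₀ hc0, map_one, map_one]
  have hdvd0 : gL ∣ gL0 := by
    refine ⟨Polynomial.C (MvPolynomial.C c0 : MvPolynomial (Fin n) L), ?_⟩
    rw [hgLdef, mul_comm _ gL0, mul_assoc, hCC, mul_one]
  have hgLdvd : gL ∣ HL := hdvd0.trans hgL0dvd
  have hgLdeg : gL.natDegree = 1 := by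
    rw [hgLdef, Polynomial.natDegree_mul hunitC.ne_zero hgL0irr.ne_zero,
      Polynomial.natDegree_eq_zero_of_isUnit (Polynomial.isUnit_C.mpr
        ((isUnit_iff_ne_zero.mpr (inv_ne_zero hc0)).map
          (MvPolynomial.C : L →+* MvPolynomial (Fin n) L)))]
    · rw [hgL0deg]
  have hcoeffm : ((gL.coeff 1).coeff m) = 1 := by
    rw [hgLdef, Polynomial.coeff_C_mul, MvPolynomial.coeff_C_mul, ← hc0def, inv_mul_cancel₀ hc0]
  -- Frobenius
  set φ : L →+* L := iterateFrobenius L p ℓ with hφ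
  have hφdef : ∀ y : L, φ y = y ^ p ^ ℓ := by
    intro y
    rw [hφ, iterateFrobenius_def]
  have hφsurj : Function.Surjective φ := by
    intro y
    obtain ⟨z, hz⟩ := IsAlgClosed.exists_pow_nat_eq y (n := p ^ ℓ) (pow_pos hp.pos ℓ)
    exact ⟨z, by rw [hφdef, hz]⟩
  have hφfix : ∀ k : K, φ (algebraMap K L k) = algebraMap K L k := by
    intro k
    rw [hφdef, ← map_pow, ← hcard, FiniteField.pow_card]
  set φe : L ≃+* L := RingEquiv.ofBijective φ ⟨φ.injective, hφsurj⟩ with hφe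
  set Φe : Polynomial (MvPolynomial (Fin n) L) ≃+* Polynomial (MvPolynomial (Fin n) L) :=
    Polynomial.mapEquiv (MvPolynomial.mapEquiv (Fin n) φe) with hΦe
  have hΦapp : ∀ q : Polynomial (MvPolynomial (Fin n) L),
      Φe q = Polynomial.map (MvPolynomial.map φ) q := fun q => rfl
  have hΦHL : Φe HL = HL := by
    rw [hΦapp, hHL, Polynomial.map_map]
    congr 1
    apply MvPolynomial.ringHom_ext
    · intro r
      simp [hθ, MvPolynomial.map_C, hφfix]
    · intro i
      simp [hθ, MvPolynomial.map_X]
  have hΦinj : Function.Injective (MvPolynomial.map φ : MvPolynomial (Fin n) L →+* _) :=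
    MvPolynomial.map_injective _ φ.injective
  have hΦgLirr : Irreducible (Φe gL) := (MulEquiv.irreducible_iff Φe).mpr hgLirr
  have hΦgLdeg : (Φe gL).natDegree = 1 := by
    rw [hΦapp, Polynomial.natDegree_map_eq_of_injective hΦinj, hgLdeg]
  have hΦgLdvd : Φe gL ∣ HL := by
    rw [← hΦHL]
    exact map_dvd Φe hgLdvd
  have hgLdvd' := hgLdvd
  obtain ⟨w, hw⟩ := hgLdvd
  have hw0 : w ≠ 0 := by
    intro h
    rw [h, mul_zero] at hw
    exact hHL0 hw
  have hwdeg : w.natDegree = 0 := by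
    have h5 := hndL
    rw [hw, Polynomial.natDegree_mul hgLirr.ne_zero hw0, hgLdeg] at h5
    omega
  have hprime : Prime (Φe gL) := UniqueFactorizationMonoid.irreducible_iff_prime.mp hΦgLirr
  have hdvd2 : Φe gL ∣ gL := by
    rcases hprime.2.2 _ _ (hw ▸ hΦgLdvd) with h | h
    · exact h
    · exfalso
      have := Polynomial.natDegree_le_of_dvd h hw0
      omega
  obtain ⟨u2, hu2⟩ := hdvd2
  have hu2unit : IsUnit u2 := by
    rcases hgLirr.isUnit_or_isUnit hu2 with h | h
    · exact absurd h hΦgLirr.not_isUnit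
    · exact h
  have hu2deg : u2.natDegree = 0 := Polynomial.natDegree_eq_zero_of_isUnit hu2unit
  have hu2C := Polynomial.eq_C_of_natDegree_eq_zero hu2deg
  have hu2Cunit : IsUnit (u2.coeff 0) := Polynomial.isUnit_C.mp (hu2C ▸ hu2unit)
  obtain ⟨cu, hcu⟩ := isUnit_eq_C _ _ hu2Cunit
  have hgLeq : gL = Φe gL * Polynomial.C (MvPolynomial.C cu) := by
    conv_lhs => rw [hu2]
    rw [hu2C, hcu]
  have hcu1 : cu = 1 := by
    have h6 := congrArg (fun q => (Polynomial.coeff q 1).coeff m) hgLeq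
    simp only [Polynomial.coeff_mul_C] at h6
    rw [hcoeffm, mul_comm, MvPolynomial.coeff_C_mul, hΦapp, Polynomial.coeff_map,
      MvPolynomial.coeff_map, hcoeffm, map_one, mul_one] at h6
    exact h6.symm
  have hfixed : Φe gL = gL := by
    rw [hcu1, map_one, map_one, mul_one] at hgLeq
    exact hgLeq.symm
  have hrange : ∀ (k : ℕ) (m' : Fin n →₀ ℕ),
      (gL.coeff k).coeff m' ∈ Set.range (algebraMap K L) := by
    intro k m'
    apply mem_range_of_pow_card
    have h7 := congrArg (fun q => (Polynomial.coeff q k).coeff m') hfixed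
    simp only [hΦapp, Polynomial.coeff_map, MvPolynomial.coeff_map] at h7
    rw [hcard, ← hφdef]
    exact h7
  have hlift : ∀ k : ℕ, gL.coeff k ∈ Set.range (θ : MvPolynomial (Fin n) K → _) := by
    intro k
    obtain ⟨q0, hq0⟩ := mv_lift (K := K) (gL.coeff k) (hrange k)
    exact ⟨q0, hq0⟩
  obtain ⟨g0, hg0⟩ := (Polynomial.mem_lifts _).mp
    ((Polynomial.lifts_iff_coeff_lifts gL).mpr hlift)
  refine ⟨g0, ?_, ?_⟩
  · rw [show Polynomial.map θ g0 = gL from hg0]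
    exact hHL ▸ hgLdvd'
  · rw [show Polynomial.map θ g0 = gL from hg0]
    exact hgLirr


noncomputable def uvec (R : Type*) [CommRing R] : Fin 5 → MvPolynomial (Fin 5) R :=
  fun i => if i = 2 then X 2 + X 4 else X i

noncomputable def vvec (R : Type*) [CommRing R] : Fin 5 → MvPolynomial (Fin 5) R :=
  fun i => if i = 2 then X 2 - X 4 else X i

variable {R : Type*} [CommRing R]

@[simp] lemma uvec_0 : uvec R 0 = X 0 := if_neg (by decide)
@[simp] lemma uvec_1 : uvec R 1 = X 1 := if_neg (by decide)
@[simp] lemma uvec_2 : uvec R 2 = X 2 + X 4 := if_pos rfl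
@[simp] lemma uvec_3 : uvec R 3 = X 3 := if_neg (by decide)
@[simp] lemma uvec_4 : uvec R 4 = X 4 := if_neg (by decide)
@[simp] lemma vvec_0 : vvec R 0 = X 0 := if_neg (by decide)
@[simp] lemma vvec_1 : vvec R 1 = X 1 := if_neg (by decide)
@[simp] lemma vvec_2 : vvec R 2 = X 2 - X 4 := if_pos rfl
@[simp] lemma vvec_3 : vvec R 3 = X 3 := if_neg (by decide)
@[simp] lemma vvec_4 : vvec R 4 = X 4 := if_neg (by decide)

noncomputable def tauEquiv (R : Type*) [CommRing R] :
    MvPolynomial (Fin 5) R ≃ₐ[R] MvPolynomial (Fin 5) R :=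
  AlgEquiv.ofAlgHom (aeval (uvec R)) (aeval (vvec R))
    (by
      apply MvPolynomial.algHom_ext
      intro i
      fin_cases i <;> simp)
    (by
      apply MvPolynomial.algHom_ext
      intro i
      fin_cases i <;> simp)

lemma tauEquiv_apply (q : MvPolynomial (Fin 5) R) : tauEquiv R q = aeval (uvec R) q := rfl

lemma tauEquiv_symm_apply (q : MvPolynomial (Fin 5) R) :
    (tauEquiv R).symm q = aeval (vvec R) q := rfl

lemma map_aeval_vvec {K L : Type*} [CommRing K] [CommRing L] (f : K →+* L)
    (q : MvPolynomial (Fin 5) K) :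
    MvPolynomial.map f (aeval (vvec K) q) = aeval (vvec L) (MvPolynomial.map f q) := by
  have h : (MvPolynomial.map f).comp ((aeval (vvec K)).toRingHom) =
      ((aeval (vvec L)).toRingHom).comp (MvPolynomial.map f) := by
    apply MvPolynomial.ringHom_ext
    · intro r
      simp [aeval_C, MvPolynomial.algebraMap_eq]
    · intro i
      fin_cases i <;> simp
  exact RingHom.congr_fun h q



noncomputable def Phat {K : Type*} [Field K] (b : ℕ → ℕ → K) (d : ℕ) :
    MvPolynomial (Fin 4) K :=
  -((X 1 - X 3) * ∑ i ∈ Finset.range (d + 1), C (b i 1) * (X 3 ^ i - X 1 ^ i) * X 0 ^ (d - i - 1))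

noncomputable def Qhat {K : Type*} [Field K] (a : ℕ → K) (b : ℕ → ℕ → K) (d : ℕ) :
    MvPolynomial (Fin 4) K :=
  X 2 ^ 2 * X 0 ^ (d - 1)
  - X 2 * (∑ i ∈ Finset.range (d + 1), C (a i) * (X 3 ^ i - X 1 ^ i) * X 0 ^ (d - i))
  - (X 1 - X 3) * ∑ i ∈ Finset.range (d + 1),
      (C (b i 0) * (X 3 ^ i - X 1 ^ i) * X 0 ^ (d - i)
        - C (b i 1) * (X 1 ^ i * X 2) * X 0 ^ (d - i - 1))

def g4 : Fin 4 → Fin 5 := Fin.castSucc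

@[simp] lemma g4_0 : g4 0 = 0 := rfl
@[simp] lemma g4_1 : g4 1 = 1 := rfl
@[simp] lemma g4_2 : g4 2 = 2 := rfl
@[simp] lemma g4_3 : g4 3 = 3 := rfl

lemma Phat_ne_zero {K : Type*} [Field K] (b : ℕ → ℕ → K) (d : ℕ)
    (hb01 : b 0 1 = 0) (i0 : ℕ) (hi0 : b i0 1 ≠ 0) (hle : i0 + 1 ≤ d) :
    Phat b d ≠ 0 := by
  classical
  intro h
  have h1 := congrArg (aeval (![1, 1, 1, Polynomial.X] : Fin 4 → Polynomial K)) h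
  rw [Phat, map_zero] at h1
  simp only [map_neg, map_mul, map_sub, map_sum, map_pow, aeval_X, Matrix.cons_val_zero,
    Matrix.cons_val_one, Matrix.head_cons, Matrix.cons_val_two, Matrix.tail_cons,
    Matrix.cons_val_three, aeval_C, one_pow] at h1
  simp only [mul_one, Polynomial.algebraMap_eq] at h1
  rw [neg_eq_zero] at h1
  have h3 : (∑ i ∈ Finset.range (d + 1), Polynomial.C (b i 1) * (Polynomial.X ^ i - 1)) = 0 := by
    have hX : (1 : Polynomial K) - Polynomial.X ≠ 0 := by
      intro hh
      have := congrArg (fun q => Polynomial.coeff q 1) hh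
      simp [Polynomial.coeff_one] at this
    exact (mul_eq_zero.mp h1).resolve_left hX
  have h4 := congrArg (fun q => Polynomial.coeff q i0) h3
  have hi0ne : i0 ≠ 0 := fun hh => hi0 (hh ▸ hb01)
  simp only [Polynomial.finset_sum_coeff, Polynomial.coeff_zero, mul_sub, mul_one,
    Polynomial.coeff_sub, Polynomial.coeff_C_mul, Polynomial.coeff_X_pow, Polynomial.coeff_C,
    mul_ite, mul_zero, if_neg hi0ne, sub_zero] at h4
  rw [Finset.sum_ite_eq (Finset.range (d + 1)) i0 (fun i => b i 1)] at h4
  rw [if_pos (Finset.mem_range.mpr (by omega))] at h4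
  exact hi0 h4


lemma key_eq {K : Type} [Field K] (a : ℕ → K) (b : ℕ → ℕ → K) (d : ℕ) (hd2 : 2 ≤ d)
    (hb2 : ∀ i j, 2 ≤ j → b i j = 0) :
    aeval (uvec K) (SpolySpec a b d) =
      rename g4 (Qhat a b d) + rename g4 (Phat b d) * X 4 := by
  classical
  have hin : ∀ i : ℕ, (∑ j ∈ Finset.range (d + 1),
      C (b i j) * (X 3 ^ i * X 4 ^ j - X 1 ^ i * X 2 ^ j) * X 0 ^ (d - i - j)
        : MvPolynomial (Fin 5) K)
      = C (b i 0) * (X 3 ^ i - X 1 ^ i) * X 0 ^ (d - i)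
        + C (b i 1) * (X 3 ^ i * X 4 - X 1 ^ i * X 2) * X 0 ^ (d - i - 1) := by
    intro i
    have hsub : ({0, 1} : Finset ℕ) ⊆ Finset.range (d + 1) := by
      intro j hj
      simp only [Finset.mem_insert, Finset.mem_singleton] at hj
      rcases hj with rfl | rfl <;> simp <;> omega
    have hzero : ∀ j ∈ Finset.range (d + 1), j ∉ ({0, 1} : Finset ℕ) →
        (C (b i j) * (X 3 ^ i * X 4 ^ j - X 1 ^ i * X 2 ^ j) * X 0 ^ (d - i - j)
          : MvPolynomial (Fin 5) K) = 0 := by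
      intro j _ hj01
      simp only [Finset.mem_insert, Finset.mem_singleton] at hj01
      push_neg at hj01
      have hj2 : 2 ≤ j := by omega
      rw [hb2 i j hj2, map_zero, zero_mul, zero_mul]
    rw [← Finset.sum_subset hsub hzero]
    rw [Finset.sum_insert (by norm_num), Finset.sum_singleton]
    norm_num
  rw [SpolySpec]
  rw [Finset.sum_congr rfl (fun i _ => hin i)]
  have hsplit : ∀ i ∈ Finset.range (d + 1),
      (C (b i 1) * (X 3 ^ i * X 4 - X 1 ^ i * (X 2 + X 4)) * X 0 ^ (d - i - 1)
        : MvPolynomial (Fin 5) K)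
      = C (b i 1) * (X 3 ^ i - X 1 ^ i) * X 0 ^ (d - i - 1) * X 4
        - C (b i 1) * (X 1 ^ i * X 2) * X 0 ^ (d - i - 1) := by
    intro i _
    ring
  simp only [map_sub, map_add, map_mul, map_pow, map_sum, aeval_X, aeval_C,
    uvec_0, uvec_1, uvec_2, uvec_3, uvec_4, MvPolynomial.algebraMap_eq,
    Qhat, Phat, g4_0, g4_1, g4_2, g4_3, rename_X, rename_C, map_neg]
  rw [Finset.sum_add_distrib]
  rw [Finset.sum_congr rfl hsplit, Finset.sum_sub_distrib, ← Finset.sum_mul]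
  rw [Finset.sum_sub_distrib]
  ring


end Stmt12

open Stmt12

theorem stmt_12
    (p ℓ : ℕ) (hp : p.Prime) (hℓ : 0 < ℓ)
    (F : Type) [Field F] [Fintype F] [CharP F p]
    (hcard : Fintype.card F = p ^ ℓ)
    (a : ℕ → F) (b : ℕ → ℕ → F)
    (ha0 : a 0 = 0) (hb00 : b 0 0 = 0) (hb01 : b 0 1 = 0)
    (d1 d2 d : ℕ)
    (hd1pos : 1 ≤ d1)
    (hd1ub : ∀ i, a i ≠ 0 → i ≤ d1)
    (hd1max : d1 ≠ 1 → a d1 ≠ 0)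
    (hd2ub : ∀ i j, b i j ≠ 0 → i + j ≤ d2)
    (hd2max : ∃ i j, i + j = d2 ∧ b i j ≠ 0)
    (hd : d = max d1 d2)
    (j2 : ℕ)
    (hj2ex : ∃ i, b i j2 ≠ 0) (hj2ub : ∀ i j, b i j ≠ 0 → j ≤ j2)
    (hp2 : 2 < p) (hdd : d1 < d2) (hj2v : j2 = 1) :
    HasAbsIrredComp (SpolySpec a b d) := by
  classical
  have hdval : d = d2 := by rw [hd, max_eq_right (le_of_lt hdd)]
  have hd2' : 2 ≤ d := by omega
  have hb2 : ∀ i j, 2 ≤ j → b i j = 0 := by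
    intro i j hj
    by_contra hne
    have := hj2ub i j hne
    omega
  obtain ⟨i0, hi0⟩ := hj2ex
  rw [hj2v] at hi0
  have hi0le : i0 + 1 ≤ d := by
    have := hd2ub i0 1 hi0
    omega
  have hPne : Phat b d ≠ 0 := Phat_ne_zero b d hb01 i0 hi0 hi0le
  set L := AlgebraicClosure F with hL
  set ρ : Fin 5 ≃ Fin 5 := finRotate 5 with hρ
  set F0 := SpolySpec a b d with hF0
  have hkey : tauEquiv F F0 = rename g4 (Qhat a b d) + rename g4 (Phat b d) * X 4 := by
    rw [tauEquiv_apply]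
    exact key_eq a b d hd2' hb2
  set F1 := rename ⇑ρ (tauEquiv F F0) with hF1
  have hcomp : ⇑ρ ∘ g4 = Fin.succ := by
    funext k
    fin_cases k <;> decide
  have hρ4 : ρ 4 = 0 := by decide
  have hF1eq : F1 = rename Fin.succ (Qhat a b d) + rename Fin.succ (Phat b d) * X 0 := by
    rw [hF1, hkey, map_add, map_mul, rename_rename, rename_rename, hcomp, rename_X, hρ4]
  have hG : finSuccEquiv F 4 F1
      = Polynomial.C (Qhat a b d) + Polynomial.C (Phat b d) * Polynomial.X := by
    rw [hF1eq, map_add, map_mul, finSuccEquiv_rename_succ, finSuccEquiv_rename_succ,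
      finSuccEquiv_X_zero]
  have hdeg : (finSuccEquiv F 4 F1).natDegree = 1 := by
    rw [hG, add_comm]
    exact Polynomial.natDegree_linear hPne
  obtain ⟨g, hgdvd, hgirr⟩ := main_lin hp hcard (finSuccEquiv F 4 F1) hdeg
  set g2 : MvPolynomial (Fin 5) F := (finSuccEquiv F 4).symm g with hg2
  have hg2map : finSuccEquiv L 4 (MvPolynomial.map (algebraMap F L) g2) =
      Polynomial.map (MvPolynomial.map (algebraMap F L)) g := by
    rw [hg2, finSuccEquiv_map, AlgEquiv.apply_symm_apply]
  have hF1map : finSuccEquiv L 4 (MvPolynomial.map (algebraMap F L) F1) =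
      Polynomial.map (MvPolynomial.map (algebraMap F L)) (finSuccEquiv F 4 F1) :=
    finSuccEquiv_map _ 4 F1
  have hirr2 : Irreducible (MvPolynomial.map (algebraMap F L) g2) := by
    refine (MulEquiv.irreducible_iff ((finSuccEquiv L 4).toRingEquiv)).mp ?_
    have : (finSuccEquiv L 4).toRingEquiv (MvPolynomial.map (algebraMap F L) g2)
        = Polynomial.map (MvPolynomial.map (algebraMap F L)) g := hg2map
    rw [this]
    exact hgirr
  have hdvd2 : MvPolynomial.map (algebraMap F L) g2 ∣ MvPolynomial.map (algebraMap F L) F1 := by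
    obtain ⟨c, hc⟩ := hgdvd
    refine ⟨(finSuccEquiv L 4).symm c, ?_⟩
    apply (finSuccEquiv L 4).injective
    rw [map_mul, hg2map, AlgEquiv.apply_symm_apply, hF1map, hc]
  have hdvd3 : g2 ∣ F1 := dvd_descent hdvd2
  have hdvd4 : rename ⇑ρ.symm g2 ∣ tauEquiv F F0 := by
    have h := map_dvd (rename (R := F) ⇑ρ.symm) hdvd3
    rwa [hF1, rename_rename, Equiv.symm_comp_self, rename_id] at h
  have hdvd5 : (tauEquiv F).symm (rename ⇑ρ.symm g2) ∣ F0 := by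
    obtain ⟨c, hc⟩ := hdvd4
    refine ⟨(tauEquiv F).symm c, ?_⟩
    apply (tauEquiv F).injective
    rw [map_mul, AlgEquiv.apply_symm_apply, AlgEquiv.apply_symm_apply, hc]
  have hirr3 : Irreducible (MvPolynomial.map (algebraMap F L) (rename ⇑ρ.symm g2)) := by
    rw [map_rename]
    refine (MulEquiv.irreducible_iff ((renameEquiv L ρ.symm).toRingEquiv)).mpr hirr2
  have hirr4 : Irreducible
      (MvPolynomial.map (algebraMap F L) ((tauEquiv F).symm (rename ⇑ρ.symm g2))) := by
    rw [tauEquiv_symm_apply, map_aeval_vvec, ← tauEquiv_symm_apply]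
    exact (MulEquiv.irreducible_iff ((tauEquiv L).symm.toRingEquiv)).mpr hirr3
  refine ⟨(tauEquiv F).symm (rename ⇑ρ.symm g2), hdvd5, ?_, hirr4⟩
  intro h0
  have hCf := eq_C_of_totalDegree_eq_zero h0
  rw [hCf, MvPolynomial.map_C] at hirr4
  rcases eq_or_ne (((tauEquiv F).symm (rename ⇑ρ.symm g2)).coeff 0) 0 with hz | hz
  · rw [hz, map_zero, map_zero] at hirr4
    exact not_irreducible_zero hirr4
  · refine hirr4.not_isUnit ?_
    exact ((isUnit_iff_ne_zero.mpr hz).map (algebraMap F L)).map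
      (MvPolynomial.C : L →+* MvPolynomial (Fin 5) L)
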